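/- For every integer n ≥ 0, every integer k, and every real x, the following three identities hold: (1) Σ_{m=0}^{n} S_1(n,m,x) · B_{m,p,q}^{(k)}(x) = n!/[n+1]_{p,q}^k; (2) Σ_{m=0}^{n} S_2(n,m,x) · C_{m,p,q}^{(k)}(x) = 1/[n+1]_{p,q}^k; (3) Σ_{m=0}^{n} S_2(n,m,−x) · Ĉ_{m,p,q}^{(k)}(x) = (−1)^n/[n+1]_{p,q}^k. -/

import Mathlib

open Finset

/-- The `(p,q)`-integer `[m]_{p,q} = (p^m - q^m)/(p - q)`. -/
noncomputable def pqInt (p q : ℝ) (m : ℕ) : ℝ := (p ^ m - q ^ m) / (p - q)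

/-- The exponential generating function `∑ f n * t^n / n!` of a sequence `f`. -/
noncomputable def egf (f : ℕ → ℝ) : PowerSeries ℝ :=
  PowerSeries.mk fun n => f n / n.factorial

/-- The power series `∑_{m ≥ 0} (1 - e^{-t})^m / [m+1]_{p,q}^k`
(which equals `Li_{k,p,q}(1 - e^{-t}) / (1 - e^{-t})`).
Since `(1 - e^{-t})^m` has order at least `m`, the `n`-th coefficient only
receives contributions from `m ≤ n`. -/
noncomputable def pqBernSeries (p q : ℝ) (k : ℤ) : PowerSeries ℝ :=
  PowerSeries.mk fun n =>
    ∑ m ∈ Finset.range (n + 1),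
      PowerSeries.coeff n ((1 - PowerSeries.rescale (-1) (PowerSeries.exp ℝ)) ^ m) /
        pqInt p q (m + 1) ^ k

/-- The unsigned Stirling numbers of the first kind, defined by the recurrence
`S1(n+1, m+1) = n * S1(n, m+1) + S1(n, m)`, so that
`x(x+1)⋯(x+n-1) = ∑_{m=0}^{n} S1(n,m) x^m`. -/
def stirling1 : ℕ → ℕ → ℕ
  | 0, 0 => 1
  | 0, _ + 1 => 0
  | _ + 1, 0 => 0
  | n + 1, m + 1 => n * stirling1 n (m + 1) + stirling1 n m

/-- Carlitz's weighted Stirling numbers of the first kind,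
`S1(n,m,x) = ∑_{i=0}^{n-m} binom(m+i,i) S1(n,m+i) x^i`. -/
noncomputable def stirling1W (n m : ℕ) (x : ℝ) : ℝ :=
  ∑ i ∈ Finset.range (n - m + 1), ((m + i).choose i : ℝ) * (stirling1 n (m + i) : ℝ) * x ^ i

/-- Carlitz's weighted Stirling numbers of the second kind,
`S2(n,m,x) = (1/m!) ∑_{j=0}^{m} (-1)^(m-j) binom(m,j) (x+j)^n`. -/
noncomputable def stirling2W (n m : ℕ) (x : ℝ) : ℝ :=
  (1 / (m.factorial : ℝ)) *
    ∑ j ∈ Finset.range (m + 1), (-1 : ℝ) ^ (m - j) * (m.choose j : ℝ) * (x + j) ^ n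

/-- The `(p,q)`-poly-Cauchy polynomials of the first kind. -/
noncomputable def pqCauchy1 (p q : ℝ) (k : ℤ) (x : ℝ) (n : ℕ) : ℝ :=
  ∑ m ∈ Finset.range (n + 1),
    (-1 : ℝ) ^ (n - m) * (stirling1 n m : ℝ) *
      ∑ l ∈ Finset.range (m + 1),
        (m.choose l : ℝ) * (-x) ^ l / pqInt p q (m - l + 1) ^ k

/-- The `(p,q)`-poly-Cauchy polynomials of the second kind. -/
noncomputable def pqCauchy2 (p q : ℝ) (k : ℤ) (x : ℝ) (n : ℕ) : ℝ :=
  (-1 : ℝ) ^ n *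
    ∑ m ∈ Finset.range (n + 1),
      (stirling1 n m : ℝ) *
        ∑ l ∈ Finset.range (m + 1),
          (m.choose l : ℝ) * (-x) ^ l / pqInt p q (m - l + 1) ^ k

section Aux
open Polynomial

lemma stirling1_zero_of_lt : ∀ n m : ℕ, n < m → stirling1 n m = 0
  | 0, _+1, _ => rfl
  | n+1, m+1, h => by
    have h1 := stirling1_zero_of_lt n (m+1) (by omega)
    have h2 := stirling1_zero_of_lt n m (by omega)
    simp [stirling1, h1, h2]

lemma mul_stirling1_zero (n : ℕ) : n * stirling1 n 0 = 0 := by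
  cases n with
  | zero => simp
  | succ n => simp [stirling1]

lemma coeff_sum_C_mul_X_pow (c : ℕ → ℝ) (n r : ℕ) :
    (∑ m ∈ range n, C (c m) * X ^ m).coeff r = if r < n then c r else 0 := by
  rw [Polynomial.finset_sum_coeff]
  simp only [Polynomial.coeff_C_mul, Polynomial.coeff_X_pow, mul_ite, mul_one, mul_zero]
  rw [Finset.sum_ite_eq (range n) r c]
  simp [Finset.mem_range]

lemma prod_X_add_nat (n : ℕ) :
    ∏ i ∈ range n, (X + C ((i : ℝ))) =
      ∑ m ∈ range (n+1), C ((stirling1 n m : ℝ)) * X ^ m := by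
  induction n with
  | zero => simp [stirling1]
  | succ n ih =>
    rw [Finset.prod_range_succ, ih]
    have key : (∑ m ∈ range (n+1), C ((stirling1 n m : ℝ)) * X ^ m) *
        (X + C ((n:ℝ))) =
        (∑ m ∈ range (n+1), C ((stirling1 n m : ℝ)) * X ^ (m+1)) +
        ∑ m ∈ range (n+1), C (((n * stirling1 n m : ℕ) : ℝ)) * X ^ m := by
      rw [mul_add, Finset.sum_mul, Finset.sum_mul]
      congr 1
      · exact Finset.sum_congr rfl fun m _ => by ring
      · refine Finset.sum_congr rfl fun m _ => ?_
        rw [Nat.cast_mul, C_mul]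
        ring
    rw [key]
    have h2 : ∑ m ∈ range (n+1), C (((n * stirling1 n m : ℕ) : ℝ)) * X ^ m
        = ∑ m ∈ range (n+1), C (((n * stirling1 n (m+1) : ℕ) : ℝ)) * X ^ (m+1) := by
      have e1 := Finset.sum_range_succ
        (fun m => C (((n * stirling1 n m : ℕ) : ℝ)) * X ^ m) (n+1)
      have e2 := Finset.sum_range_succ'
        (fun m => C (((n * stirling1 n m : ℕ) : ℝ)) * X ^ m) (n+1)
      rw [stirling1_zero_of_lt n (n+1) (by omega)] at e1
      rw [mul_stirling1_zero n] at e2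
      simp only [Nat.mul_zero, Nat.cast_zero, map_zero, zero_mul, add_zero, mul_zero] at e1 e2
      rw [← e1, e2]
    rw [h2, Finset.sum_range_succ' (fun m => C ((stirling1 (n+1) m : ℝ)) * X ^ m) (n+1)]
    have h0 : stirling1 (n+1) 0 = 0 := rfl
    rw [h0]
    simp only [Nat.cast_zero, map_zero, zero_mul, add_zero, pow_zero, mul_one]
    rw [← Finset.sum_add_distrib]
    refine Finset.sum_congr rfl fun m _ => ?_
    have : stirling1 (n+1) (m+1) = n * stirling1 n (m+1) + stirling1 n m := rfl
    rw [this]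
    push_cast
    rw [C_add, C_mul]
    ring

lemma stirling1W_of_lt {n m : ℕ} (h : n < m) (x : ℝ) : stirling1W n m x = 0 := by
  have h0 : n - m = 0 := by omega
  rw [stirling1W, h0]
  simp [stirling1_zero_of_lt n m h]

lemma stirling1W_eq_coeff (n m : ℕ) (x : ℝ) :
    stirling1W n m x = (∏ i ∈ range n, (X + C (x + (i:ℝ)))).coeff m := by
  have hcomp : ∏ i ∈ range n, (X + C (x + (i:ℝ)))
      = (∑ M ∈ range (n+1), C ((stirling1 n M : ℝ)) * X ^ M).comp (X + C x) := by
    rw [← prod_X_add_nat, Polynomial.prod_comp]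
    refine Finset.prod_congr rfl fun i _ => ?_
    rw [Polynomial.add_comp, Polynomial.X_comp, Polynomial.C_comp, C_add]
    ring
  rw [hcomp]
  have hexp : (∑ M ∈ range (n+1), C ((stirling1 n M : ℝ)) * X ^ M).comp (X + C x)
      = ∑ M ∈ range (n+1), C ((stirling1 n M : ℝ)) * (X + C x) ^ M := by
    rw [Polynomial.comp, Polynomial.eval₂_finset_sum]
    refine Finset.sum_congr rfl fun M _ => ?_
    rw [Polynomial.eval₂_mul, Polynomial.eval₂_C, Polynomial.eval₂_X_pow]
  rw [hexp, Polynomial.finset_sum_coeff]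
  simp only [Polynomial.coeff_C_mul, Polynomial.coeff_X_add_C_pow]
  -- goal: stirling1W n m x = ∑ M ∈ range (n+1), s1 n M * (x^(M-m) * C(M,m))
  rcases le_or_gt m n with hmn | hmn
  · have hlow : ∑ M ∈ Finset.Ico 0 m,
        (stirling1 n M : ℝ) * (x ^ (M - m) * ((M.choose m : ℕ) : ℝ)) = 0 := by
      refine Finset.sum_eq_zero fun M hM => ?_
      rw [Finset.mem_Ico] at hM
      rw [Nat.choose_eq_zero_of_lt hM.2]
      simp
    have key : (∑ M ∈ range (n+1), (stirling1 n M : ℝ) * (x ^ (M - m) * ((M.choose m : ℕ) : ℝ)))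
        = ∑ i ∈ range (n-m+1),
            (stirling1 n (m+i) : ℝ) * (x ^ i * (((m+i).choose m : ℕ) : ℝ)) := by
      calc ∑ M ∈ range (n+1), (stirling1 n M : ℝ) * (x ^ (M - m) * ((M.choose m : ℕ) : ℝ))
          = ∑ M ∈ Finset.Ico 0 m, (stirling1 n M : ℝ) * (x ^ (M - m) * ((M.choose m : ℕ) : ℝ))
            + ∑ M ∈ Finset.Ico m (n+1), (stirling1 n M : ℝ) * (x ^ (M - m) * ((M.choose m : ℕ) : ℝ)) := by
            rw [Finset.range_eq_Ico,
              Finset.sum_Ico_consecutive _ (Nat.zero_le m) (by omega : m ≤ n+1)]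
        _ = ∑ M ∈ Finset.Ico m (n+1), (stirling1 n M : ℝ) * (x ^ (M - m) * ((M.choose m : ℕ) : ℝ)) := by
            rw [hlow, zero_add]
        _ = ∑ i ∈ range (n+1-m),
              (stirling1 n (m+i) : ℝ) * (x ^ (m+i-m) * (((m+i).choose m : ℕ) : ℝ)) :=
            by rw [Finset.sum_Ico_eq_sum_range]
        _ = ∑ i ∈ range (n-m+1),
              (stirling1 n (m+i) : ℝ) * (x ^ i * (((m+i).choose m : ℕ) : ℝ)) := by
            rw [show n+1-m = n-m+1 from by omega]
            refine Finset.sum_congr rfl fun i _ => ?_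
            rw [Nat.add_sub_cancel_left]
    rw [key, stirling1W]
    refine Finset.sum_congr rfl fun i _ => ?_
    have hsymm : (m + i).choose m = (m + i).choose i := by
      have := Nat.choose_symm (by omega : i ≤ m + i)
      simpa [Nat.add_sub_cancel] using this
    rw [hsymm]
    ring
  · rw [stirling1W_of_lt hmn]
    refine (Finset.sum_eq_zero fun M hM => ?_).symm
    rw [Finset.mem_range] at hM
    rw [Nat.choose_eq_zero_of_lt (by omega : M < m)]
    simp


lemma PR1 (n : ℕ) (x : ℝ) :
    ∏ i ∈ range n, (X + C (x + (i:ℝ)))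
      = ∑ m ∈ range (n+1), C (stirling1W n m x) * X ^ m := by
  ext r
  rw [coeff_sum_C_mul_X_pow, ← stirling1W_eq_coeff]
  split_ifs with h
  · rfl
  · exact stirling1W_of_lt (by omega) x

lemma E1 (N j : ℕ) (x : ℝ) :
    ∑ m ∈ range (N+1), stirling1W N m x * ((m.choose j : ℝ) * (-x) ^ (m - j))
      = (stirling1 N j : ℝ) := by
  have hcomp : (∑ m ∈ range (N+1), C (stirling1W N m x) * X ^ m).comp (X + C (-x))
      = ∏ i ∈ range N, (X + C ((i:ℝ))) := by
    rw [← PR1, Polynomial.prod_comp]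
    refine Finset.prod_congr rfl fun i _ => ?_
    rw [Polynomial.add_comp, Polynomial.X_comp, Polynomial.C_comp, C_add, C_neg]
    ring
  have hexp : (∑ m ∈ range (N+1), C (stirling1W N m x) * X ^ m).comp (X + C (-x))
      = ∑ m ∈ range (N+1), C (stirling1W N m x) * (X + C (-x)) ^ m := by
    rw [Polynomial.comp, Polynomial.eval₂_finset_sum]
    refine Finset.sum_congr rfl fun M _ => ?_
    rw [Polynomial.eval₂_mul, Polynomial.eval₂_C, Polynomial.eval₂_X_pow]
  have := congrArg (fun P => Polynomial.coeff P j) hcomp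
  simp only [hexp ▸ hcomp.symm] at this
  -- compute coefficients directly
  have hL : ((∑ m ∈ range (N+1), C (stirling1W N m x) * (X + C (-x)) ^ m)).coeff j
      = ∑ m ∈ range (N+1), stirling1W N m x * ((-x) ^ (m - j) * ((m.choose j : ℕ) : ℝ)) := by
    rw [Polynomial.finset_sum_coeff]
    refine Finset.sum_congr rfl fun m _ => ?_
    rw [Polynomial.coeff_C_mul, Polynomial.coeff_X_add_C_pow]
  have hR : (∏ i ∈ range N, (X + C ((i:ℝ)))).coeff j = (stirling1 N j : ℝ) := by
    have h0 : ∀ i : ℕ, ((i:ℝ)) = (0:ℝ) + (i:ℝ) := fun i => by ring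
    have : (∏ i ∈ range N, (X + C ((i:ℝ)))) = ∏ i ∈ range N, (X + C ((0:ℝ) + (i:ℝ))) := by
      refine Finset.prod_congr rfl fun i _ => by rw [← h0]
    rw [this, ← stirling1W_eq_coeff]
    rw [stirling1W]
    rw [Finset.sum_eq_single 0]
    · simp
    · intro i _ hi
      rw [zero_pow hi]
      ring
    · intro h
      exact absurd (Finset.mem_range.mpr (by omega)) h
  calc ∑ m ∈ range (N+1), stirling1W N m x * ((m.choose j : ℝ) * (-x) ^ (m - j))
      = ∑ m ∈ range (N+1), stirling1W N m x * ((-x) ^ (m - j) * ((m.choose j : ℕ) : ℝ)) := by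
        refine Finset.sum_congr rfl fun m _ => by ring
    _ = ((∑ m ∈ range (N+1), C (stirling1W N m x) * (X + C (-x)) ^ m)).coeff j := hL.symm
    _ = ((∑ m ∈ range (N+1), C (stirling1W N m x) * X ^ m).comp (X + C (-x))).coeff j := by
        rw [hexp]
    _ = (∏ i ∈ range N, (X + C ((i:ℝ)))).coeff j := by rw [hcomp]
    _ = (stirling1 N j : ℝ) := hR

lemma PRsigned (n : ℕ) (x : ℝ) :
    ∏ i ∈ range n, (X - C (x + (i:ℝ)))
      = ∑ r ∈ range (n+1), C ((-1:ℝ)^(n+r) * stirling1W n r x) * X ^ r := by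
  have h1 : ∏ i ∈ range n, (-X + C (x + (i:ℝ)))
      = (∏ i ∈ range n, (X + C (x + (i:ℝ)))).comp (-X) := by
    rw [Polynomial.prod_comp]
    refine Finset.prod_congr rfl fun i _ => ?_
    rw [Polynomial.add_comp, Polynomial.X_comp, Polynomial.C_comp]
  have h2 : (∏ i ∈ range n, (X + C (x + (i:ℝ)))).comp (-X)
      = ∑ m ∈ range (n+1), C (stirling1W n m x) * (-X) ^ m := by
    rw [PR1, Polynomial.comp, Polynomial.eval₂_finset_sum]
    refine Finset.sum_congr rfl fun M _ => ?_
    rw [Polynomial.eval₂_mul, Polynomial.eval₂_C, Polynomial.eval₂_X_pow]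
  have h3 : ∏ i ∈ range n, (X - C (x + (i:ℝ)))
      = (-1:ℝ[X])^n * ∏ i ∈ range n, (-X + C (x + (i:ℝ))) := by
    calc ∏ i ∈ range n, (X - C (x + (i:ℝ)))
        = ∏ i ∈ range n, ((-1:ℝ[X]) * (-X + C (x + (i:ℝ)))) :=
          Finset.prod_congr rfl fun i _ => by ring
      _ = (∏ _i ∈ range n, (-1:ℝ[X])) * ∏ i ∈ range n, (-X + C (x + (i:ℝ))) :=
          Finset.prod_mul_distrib
      _ = (-1:ℝ[X])^n * ∏ i ∈ range n, (-X + C (x + (i:ℝ))) := by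
          rw [Finset.prod_const, Finset.card_range]
  rw [h3, h1, h2, Finset.mul_sum]
  refine Finset.sum_congr rfl fun r _ => ?_
  have hc : (-1:ℝ[X]) = C (-1:ℝ) := by simp
  rw [neg_pow (X : ℝ[X]) r]
  simp only [hc, ← C_pow]
  rw [show C ((-1:ℝ)^n) * (C (stirling1W n r x) * (C ((-1:ℝ)^r) * X ^ r))
      = (C ((-1:ℝ)^n) * C (stirling1W n r x) * C ((-1:ℝ)^r)) * X ^ r from by ring,
    ← C_mul, ← C_mul]
  congr 1
  rw [pow_add]
  ring

lemma stirling2W_zero_right (n : ℕ) (x : ℝ) : stirling2W n 0 x = x ^ n := by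
  simp [stirling2W]

lemma choose_mul_sub_nat (j i : ℕ) (h : i ≤ j) :
    (j+1).choose i * (j+1-i) = (j+1) * j.choose i := by
  have h1 : (j+1).choose i = (j+1).choose (j+1-i) := (Nat.choose_symm (by omega)).symm
  have h2 : j.choose i = j.choose (j-i) := (Nat.choose_symm h).symm
  have h3 := Nat.add_one_mul_choose_eq j (j - i)
  have h4 : j - i + 1 = j + 1 - i := by omega
  rw [h1, h2, ← h4]
  exact h3.symm

lemma stirling2W_succ_succ (n j : ℕ) (x : ℝ) :
    stirling2W (n+1) (j+1) x = stirling2W n j x + (x + ((j:ℝ)+1)) * stirling2W n (j+1) x := by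
  have claim : ∀ i ∈ range (j+2),
      (-1:ℝ)^(j+1-i) * ((j+1).choose i : ℝ) * ((i:ℝ) - ((j:ℝ)+1))
        = ((j:ℝ)+1) * ((-1:ℝ)^(j-i) * (j.choose i : ℝ)) := by
    intro i hi
    rw [Finset.mem_range] at hi
    rcases Nat.lt_or_ge i (j+1) with hij | hij
    · have hij' : i ≤ j := by omega
      have hs : (-1:ℝ)^(j+1-i) = -(-1:ℝ)^(j-i) := by
        rw [show j+1-i = (j-i)+1 from by omega, pow_succ]
        ring
      have hv : ((i:ℝ) - ((j:ℝ)+1)) = -(((j+1-i : ℕ) : ℝ)) := by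
        rw [Nat.cast_sub (by omega : i ≤ j+1)]
        push_cast
        ring
      rw [hs, hv]
      have hn := choose_mul_sub_nat j i hij'
      have hn' : (((j+1).choose i : ℕ) : ℝ) * ((j+1-i : ℕ) : ℝ) = ((j:ℝ)+1) * (j.choose i : ℝ) := by
        rw [← Nat.cast_mul, hn]
        push_cast
        ring
      calc -(-1:ℝ)^(j-i) * ((j+1).choose i : ℝ) * -(((j+1-i : ℕ) : ℝ))
          = (-1:ℝ)^(j-i) * ((((j+1).choose i : ℕ) : ℝ) * ((j+1-i : ℕ) : ℝ)) := by ring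
        _ = (-1:ℝ)^(j-i) * (((j:ℝ)+1) * (j.choose i : ℝ)) := by rw [hn']
        _ = ((j:ℝ)+1) * ((-1:ℝ)^(j-i) * (j.choose i : ℝ)) := by ring
    · have hi' : i = j+1 := by omega
      subst hi'
      rw [Nat.choose_succ_self j]
      push_cast
      ring
  have hsum : ∑ i ∈ range (j+2), (-1:ℝ)^(j+1-i) * ((j+1).choose i : ℝ) * (x + (i:ℝ)) ^ (n+1)
      = (x + ((j:ℝ)+1)) * (∑ i ∈ range (j+2), (-1:ℝ)^(j+1-i) * ((j+1).choose i : ℝ) * (x + (i:ℝ)) ^ n)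
        + ((j:ℝ)+1) * ∑ i ∈ range (j+1), (-1:ℝ)^(j-i) * (j.choose i : ℝ) * (x + (i:ℝ)) ^ n := by
    have hext : ∑ i ∈ range (j+1), (-1:ℝ)^(j-i) * (j.choose i : ℝ) * (x + (i:ℝ)) ^ n
        = ∑ i ∈ range (j+2), (-1:ℝ)^(j-i) * (j.choose i : ℝ) * (x + (i:ℝ)) ^ n := by
      rw [Finset.sum_range_succ (fun i => (-1:ℝ)^(j-i) * (j.choose i : ℝ) * (x + (i:ℝ)) ^ n) (j+1)]
      rw [Nat.choose_succ_self j]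
      simp
    rw [hext, Finset.mul_sum, Finset.mul_sum, ← Finset.sum_add_distrib]
    refine Finset.sum_congr rfl fun i hi => ?_
    have hcl := claim i hi
    have expand : (x + (i:ℝ)) ^ (n+1) = (x + (i:ℝ)) ^ n * (x + (i:ℝ)) := by rw [pow_succ]
    rw [expand]
    linear_combination (x + (i:ℝ))^n * hcl
  show (1/(((j+1).factorial : ℕ) : ℝ)) *
      ∑ i ∈ range (j+2), (-1:ℝ)^(j+1-i) * (((j+1).choose i : ℕ) : ℝ) * (x + (i:ℝ))^(n+1)
    = (1/((j.factorial : ℕ) : ℝ)) *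
        ∑ i ∈ range (j+1), (-1:ℝ)^(j-i) * ((j.choose i : ℕ) : ℝ) * (x + (i:ℝ))^n
      + (x + ((j:ℝ)+1)) * ((1/(((j+1).factorial : ℕ) : ℝ)) *
          ∑ i ∈ range (j+2), (-1:ℝ)^(j+1-i) * (((j+1).choose i : ℕ) : ℝ) * (x + (i:ℝ))^n)
  rw [hsum]
  have hfact : (((j+1).factorial : ℕ) : ℝ) = ((j:ℝ)+1) * ((j.factorial : ℕ) : ℝ) := by
    rw [Nat.factorial_succ]
    push_cast
    ring
  have hj : ((j:ℝ)+1) ≠ 0 := by positivity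
  have hf : ((j.factorial : ℕ) : ℝ) ≠ 0 := by
    exact_mod_cast j.factorial_ne_zero
  rw [hfact]
  field_simp
  ring

lemma stirling2W_of_lt : ∀ n j : ℕ, n < j → ∀ x : ℝ, stirling2W n j x = 0 := by
  intro n
  induction n with
  | zero =>
    intro j hj x
    obtain ⟨j', rfl⟩ : ∃ j'', j = j'' + 1 := ⟨j - 1, by omega⟩
    rw [stirling2W]
    have : ∑ i ∈ range (j'+1+1), (-1:ℝ)^(j'+1-i) * (((j'+1).choose i : ℕ) : ℝ) * (x + (i:ℝ))^0
        = (-1:ℝ)^(j'+1) * ∑ i ∈ range (j'+1+1), (-1:ℝ)^i * (((j'+1).choose i : ℕ) : ℝ) := by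
      rw [Finset.mul_sum]
      refine Finset.sum_congr rfl fun i hi => ?_
      rw [Finset.mem_range] at hi
      have hpar : (-1:ℝ)^(j'+1-i) = (-1:ℝ)^(j'+1) * (-1:ℝ)^i := by
        have h2 : j'+1-i + 2*i = j'+1+i := by omega
        calc (-1:ℝ)^(j'+1-i) = (-1:ℝ)^(j'+1-i) * ((-1:ℝ)^2)^i := by norm_num
          _ = (-1:ℝ)^(j'+1-i+2*i) := by rw [← pow_mul, ← pow_add]
          _ = (-1:ℝ)^(j'+1+i) := by rw [h2]
          _ = (-1:ℝ)^(j'+1) * (-1:ℝ)^i := by rw [pow_add]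
      rw [hpar, pow_zero]
      ring
    rw [this]
    have hz : ∑ i ∈ range (j'+1+1), (-1:ℝ)^i * (((j'+1).choose i : ℕ) : ℝ) = 0 := by
      have hint := Int.alternating_sum_range_choose_of_ne (by omega : j'+1 ≠ 0)
      calc ∑ i ∈ range (j'+1+1), (-1:ℝ)^i * (((j'+1).choose i : ℕ) : ℝ)
          = ((∑ i ∈ range (j'+1+1), (-1:ℤ)^i * (((j'+1).choose i : ℕ) : ℤ) : ℤ) : ℝ) := by
            push_cast
            rfl
        _ = 0 := by rw [hint]; norm_num
    rw [hz]
    ring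
  | succ n ih =>
    intro j hj x
    obtain ⟨j', rfl⟩ : ∃ j'', j = j'' + 1 := ⟨j - 1, by omega⟩
    rw [stirling2W_succ_succ]
    rw [ih j' (by omega) x, ih (j'+1) (by omega) x]
    ring

lemma newton (x : ℝ) : ∀ N : ℕ,
    ∑ n ∈ range (N+1), C (stirling2W N n x) * (∏ i ∈ range n, (X - C (x + (i:ℝ)))) = X ^ N := by
  intro N
  induction N with
  | zero => simp [stirling2W]
  | succ N ih =>
    have hXP : ∀ n : ℕ, X * ∏ i ∈ range n, (X - C (x + (i:ℝ)))
        = (∏ i ∈ range (n+1), (X - C (x + (i:ℝ)))) + C (x + (n:ℝ)) * ∏ i ∈ range n, (X - C (x + (i:ℝ))) := by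
      intro n
      rw [Finset.prod_range_succ]
      ring
    have hstep : (X : ℝ[X]) ^ (N+1)
        = (∑ n ∈ range (N+1), C (stirling2W N n x) * (∏ i ∈ range (n+1), (X - C (x + (i:ℝ)))))
          + ∑ n ∈ range (N+1), C ((x + (n:ℝ)) * stirling2W N n x) * (∏ i ∈ range n, (X - C (x + (i:ℝ)))) := by
      calc (X : ℝ[X]) ^ (N+1) = X * X ^ N := by rw [pow_succ]; ring
        _ = X * ∑ n ∈ range (N+1), C (stirling2W N n x) * (∏ i ∈ range n, (X - C (x + (i:ℝ)))) := by rw [ih]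
        _ = ∑ n ∈ range (N+1), C (stirling2W N n x) * (X * ∏ i ∈ range n, (X - C (x + (i:ℝ)))) := by
            rw [Finset.mul_sum]
            exact Finset.sum_congr rfl fun n _ => by ring
        _ = ∑ n ∈ range (N+1), C (stirling2W N n x) * ((∏ i ∈ range (n+1), (X - C (x + (i:ℝ))))
              + C (x + (n:ℝ)) * ∏ i ∈ range n, (X - C (x + (i:ℝ)))) :=
            Finset.sum_congr rfl fun n _ => by rw [hXP n]
        _ = (∑ n ∈ range (N+1), C (stirling2W N n x) * (∏ i ∈ range (n+1), (X - C (x + (i:ℝ)))))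
              + ∑ n ∈ range (N+1), C ((x + (n:ℝ)) * stirling2W N n x) * (∏ i ∈ range n, (X - C (x + (i:ℝ)))) := by
            rw [← Finset.sum_add_distrib]
            exact Finset.sum_congr rfl fun n _ => by rw [C_mul]; ring
    rw [hstep]
    rw [Finset.sum_range_succ' (fun n => C (stirling2W (N+1) n x) * (∏ i ∈ range n, (X - C (x + (i:ℝ))))) (N+1)]
    have hsplit : ∀ n ∈ range (N+1),
        C (stirling2W (N+1) (n+1) x) * (∏ i ∈ range (n+1), (X - C (x + (i:ℝ))))
          = C (stirling2W N n x) * (∏ i ∈ range (n+1), (X - C (x + (i:ℝ))))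
            + C ((x + ((n:ℝ)+1)) * stirling2W N (n+1) x) * (∏ i ∈ range (n+1), (X - C (x + (i:ℝ)))) := by
      intro n _
      rw [stirling2W_succ_succ, C_add, C_mul]
      ring
    rw [Finset.sum_congr rfl hsplit, Finset.sum_add_distrib]
    have hT : ∑ n ∈ range (N+1), C ((x + ((n:ℝ)+1)) * stirling2W N (n+1) x) * (∏ i ∈ range (n+1), (X - C (x + (i:ℝ))))
        = ∑ n ∈ range (N+1), C ((x + (n:ℝ)) * stirling2W N n x) * (∏ i ∈ range n, (X - C (x + (i:ℝ))))
          - C ((x + ((0:ℕ):ℝ)) * stirling2W N 0 x) * (∏ i ∈ range 0, (X - C (x + (i:ℝ)))) := by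
      have e2 := Finset.sum_range_succ'
        (fun n => C ((x + (n:ℝ)) * stirling2W N n x) * (∏ i ∈ range n, (X - C (x + (i:ℝ))))) (N+1)
      have e1 := Finset.sum_range_succ
        (fun n => C ((x + (n:ℝ)) * stirling2W N n x) * (∏ i ∈ range n, (X - C (x + (i:ℝ))))) (N+1)
      rw [stirling2W_of_lt N (N+1) (by omega) x] at e1
      simp only [mul_zero, map_zero, zero_mul, add_zero] at e1
      rw [e1] at e2
      simp only [Nat.cast_add, Nat.cast_one] at e2
      rw [e2]
      ring
    rw [hT]
    have h00 : C (stirling2W (N+1) 0 x) * (∏ i ∈ range 0, (X - C (x + (i:ℝ))))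
        = C ((x + ((0:ℕ):ℝ)) * stirling2W N 0 x) * (∏ i ∈ range 0, (X - C (x + (i:ℝ)))) := by
      rw [stirling2W_zero_right, stirling2W_zero_right]
      congr 1
      push_cast
      ring
    rw [h00]
    ring

lemma orthB (N r : ℕ) (x : ℝ) :
    ∑ n ∈ range (N+1), stirling2W N n x * ((-1:ℝ)^(n+r) * stirling1W n r x)
      = if r = N then (1:ℝ) else 0 := by
  have h := congrArg (fun P : ℝ[X] => P.coeff r) (newton x N)
  rw [Polynomial.finset_sum_coeff] at h
  have hterm : ∀ n ∈ range (N+1),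
      (C (stirling2W N n x) * (∏ i ∈ range n, (X - C (x + (i:ℝ))))).coeff r
        = stirling2W N n x * ((-1:ℝ)^(n+r) * stirling1W n r x) := by
    intro n _
    rw [Polynomial.coeff_C_mul, PRsigned, coeff_sum_C_mul_X_pow]
    split_ifs with hr
    · rfl
    · rw [stirling1W_of_lt (by omega : n < r) x]
      ring
  rw [Finset.sum_congr rfl hterm] at h
  rw [h, Polynomial.coeff_X_pow]

noncomputable def expS : PowerSeries ℝ := 1 - PowerSeries.rescale (-1) (PowerSeries.exp ℝ)

noncomputable def cc (n m : ℕ) : ℝ := PowerSeries.coeff n (expS ^ m)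

lemma coeff_exp_real (n : ℕ) :
    PowerSeries.coeff n (PowerSeries.exp ℝ) = 1 / (n.factorial : ℝ) := by
  rw [PowerSeries.coeff_exp, eq_ratCast]
  push_cast
  ring

lemma coeff_rescale_exp (c : ℝ) (n : ℕ) :
    PowerSeries.coeff n (PowerSeries.rescale c (PowerSeries.exp ℝ)) = c ^ n / (n.factorial : ℝ) := by
  rw [PowerSeries.coeff_rescale, coeff_exp_real]
  ring

lemma deriv_rescale_exp :
    (PowerSeries.derivative ℝ) (PowerSeries.rescale (-1) (PowerSeries.exp ℝ))
      = -(PowerSeries.rescale (-1) (PowerSeries.exp ℝ)) := by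
  ext n
  rw [PowerSeries.coeff_derivative, map_neg, coeff_rescale_exp, coeff_rescale_exp,
    Nat.factorial_succ]
  have hf : ((n.factorial : ℕ) : ℝ) ≠ 0 := by exact_mod_cast n.factorial_ne_zero
  have hn : ((n:ℝ)+1) ≠ 0 := by positivity
  push_cast
  field_simp
  ring

lemma deriv_expS : (PowerSeries.derivative ℝ) expS = 1 - expS := by
  rw [expS, map_sub, Derivation.map_one_eq_zero, deriv_rescale_exp]
  ring

lemma constantCoeff_expS : PowerSeries.constantCoeff expS = 0 := by
  rw [← PowerSeries.coeff_zero_eq_constantCoeff, expS, map_sub, coeff_rescale_exp]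
  simp

lemma cc_rec (n m : ℕ) :
    ((n:ℝ)+1) * cc (n+1) (m+1) = ((m:ℝ)+1) * (cc n m - cc n (m+1)) := by
  have h : (PowerSeries.derivative ℝ) (expS ^ (m+1)) = (m+1) • (expS ^ m • ((1 : PowerSeries ℝ) - expS)) := by
    rw [Derivation.leibniz_pow, deriv_expS, Nat.add_sub_cancel]
  have hsm : (expS ^ m • ((1 : PowerSeries ℝ) - expS)) = expS ^ m - expS ^ (m+1) := by
    rw [smul_eq_mul]
    ring
  rw [hsm] at h
  have h2 := congrArg (PowerSeries.coeff n) h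
  rw [PowerSeries.coeff_derivative, map_nsmul, map_sub] at h2
  rw [nsmul_eq_mul] at h2
  have h3 : cc (n+1) (m+1) * ((n:ℝ)+1) = ((m:ℕ)+1 : ℕ) * (cc n m - cc n (m+1)) := by
    rw [cc, cc, cc]
    push_cast
    push_cast at h2
    linear_combination h2
  push_cast at h3
  linear_combination h3

lemma cc_zero_of_lt {n m : ℕ} (h : n < m) : cc n m = 0 := by
  obtain ⟨g, hg⟩ := PowerSeries.X_dvd_iff.mpr constantCoeff_expS
  rw [cc, hg, mul_pow, PowerSeries.coeff_X_pow_mul']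
  rw [if_neg (by omega)]

lemma cc_left (m : ℕ) : cc 0 m = if m = 0 then 1 else 0 := by
  rw [cc, PowerSeries.coeff_zero_eq_constantCoeff, map_pow, constantCoeff_expS, zero_pow_eq]

lemma cc_right (n : ℕ) : cc n 0 = if n = 0 then 1 else 0 := by
  rw [cc, pow_zero, PowerSeries.coeff_one]

lemma gamma_eq (N : ℕ) : ∀ m : ℕ,
    ∑ j ∈ range (N+1), (stirling1 N j : ℝ) * (j.factorial : ℝ) * cc j m
      = if m = N then (N.factorial : ℝ) else 0 := by
  induction N with
  | zero =>
    intro m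
    rw [Finset.sum_range_one, cc_left]
    simp [stirling1]
  | succ N ih =>
    intro m
    have hsum_shift : ∀ (h : ℕ → ℝ),
        ∑ j ∈ range (N+1), h (j+1) = (∑ j ∈ range (N+1), h j) + h (N+1) - h 0 := by
      intro h
      have e1 := Finset.sum_range_succ h (N+1)
      have e2 := Finset.sum_range_succ' h (N+1)
      rw [e1] at e2
      linarith
    have step1 : ∑ j ∈ range (N+1+1), (stirling1 (N+1) j : ℝ) * (j.factorial : ℝ) * cc j m
        = ∑ j ∈ range (N+1), (stirling1 (N+1) (j+1) : ℝ) * ((j+1).factorial : ℝ) * cc (j+1) m := by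
      rw [Finset.sum_range_succ' (fun j => (stirling1 (N+1) j : ℝ) * (j.factorial : ℝ) * cc j m) (N+1)]
      have hs0 : stirling1 (N+1) 0 = 0 := rfl
      rw [hs0]
      simp
    have step2 : ∀ j : ℕ, (stirling1 (N+1) (j+1) : ℝ) * ((j+1).factorial : ℝ) * cc (j+1) m
        = (N:ℝ) * ((stirling1 N (j+1) : ℝ) * ((j+1).factorial : ℝ) * cc (j+1) m)
          + (stirling1 N j : ℝ) * ((j+1).factorial : ℝ) * cc (j+1) m := by
      intro j
      have hrec : stirling1 (N+1) (j+1) = N * stirling1 N (j+1) + stirling1 N j := rfl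
      rw [hrec]
      push_cast
      ring
    rw [step1, Finset.sum_congr rfl (fun j _ => step2 j), Finset.sum_add_distrib, ← Finset.mul_sum]
    have hA : ∑ j ∈ range (N+1), (stirling1 N (j+1) : ℝ) * ((j+1).factorial : ℝ) * cc (j+1) m
        = (if m = N then (N.factorial : ℝ) else 0)
          - (stirling1 N 0 : ℝ) * ((Nat.factorial 0 : ℕ) : ℝ) * cc 0 m := by
      have hs := hsum_shift (fun j => (stirling1 N j : ℝ) * (j.factorial : ℝ) * cc j m)
      rw [ih m, stirling1_zero_of_lt N (N+1) (by omega)] at hs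
      simpa using hs
    rcases m with _ | m'
    · have hB : ∑ j ∈ range (N+1), (stirling1 N j : ℝ) * ((j+1).factorial : ℝ) * cc (j+1) 0 = 0 := by
        refine Finset.sum_eq_zero fun j _ => ?_
        rw [cc_right]
        simp
      rw [hA, hB, cc_right]
      rcases Nat.eq_zero_or_pos N with h0 | h0
      · subst h0
        simp [stirling1]
      · obtain ⟨N', rfl⟩ : ∃ N'', N = N'' + 1 := ⟨N - 1, by omega⟩
        have : stirling1 (N'+1) 0 = 0 := rfl
        rw [this]
        rw [if_neg (by omega : ¬ (0 = N'+1)), if_neg (by omega : ¬ (0 = N'+1+1))]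
        simp
    · have hB : ∑ j ∈ range (N+1), (stirling1 N j : ℝ) * ((j+1).factorial : ℝ) * cc (j+1) (m'+1)
          = ((m':ℝ)+1) * ((if m' = N then (N.factorial : ℝ) else 0)
              - (if m'+1 = N then (N.factorial : ℝ) else 0)) := by
        have hterm : ∀ j : ℕ, (stirling1 N j : ℝ) * ((j+1).factorial : ℝ) * cc (j+1) (m'+1)
            = ((m':ℝ)+1) * ((stirling1 N j : ℝ) * (j.factorial : ℝ) * cc j m')
              - ((m':ℝ)+1) * ((stirling1 N j : ℝ) * (j.factorial : ℝ) * cc j (m'+1)) := by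
          intro j
          have hr := cc_rec j m'
          have hfact : ((j+1).factorial : ℝ) = ((j:ℝ)+1) * ((j.factorial : ℕ) : ℝ) := by
            rw [Nat.factorial_succ]
            push_cast
            ring
          rw [hfact]
          linear_combination (stirling1 N j : ℝ) * ((j.factorial : ℕ) : ℝ) * hr
        rw [Finset.sum_congr rfl (fun j _ => hterm j), Finset.sum_sub_distrib,
          ← Finset.mul_sum, ← Finset.mul_sum, ih m', ih (m'+1)]
        ring
      rw [hA, hB, cc_left, if_neg (by omega : ¬ (m'+1 = 0))]
      by_cases h1 : m' + 1 = N + 1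
      · have h2 : m' = N := by omega
        rw [if_pos h1, if_pos h2, if_neg (by omega : ¬ (m'+1 = N))]
        subst h2
        rw [Nat.factorial_succ]
        push_cast
        ring
      · rw [if_neg h1, if_neg (by omega : ¬ (m' = N))]
        by_cases h3 : m' + 1 = N
        · rw [if_pos h3]
          subst h3
          push_cast
          ring
        · rw [if_neg h3]
          ring

lemma tri_sum (n : ℕ) (f : ℕ → ℕ → ℝ) :
    ∑ m ∈ range (n+1), ∑ l ∈ range (m+1), f m l
      = ∑ r ∈ range (n+1), ∑ i ∈ range (n-r+1), f (r+i) i := by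
  rw [Finset.sum_sigma', Finset.sum_sigma']
  refine Finset.sum_bij' (fun p _ => ⟨p.1 - p.2, p.2⟩) (fun p _ => ⟨p.1 + p.2, p.2⟩)
    ?_ ?_ ?_ ?_ ?_
  · rintro ⟨m, l⟩ hp
    simp only [Finset.mem_sigma, Finset.mem_range] at hp ⊢
    omega
  · rintro ⟨r, i⟩ hp
    simp only [Finset.mem_sigma, Finset.mem_range] at hp ⊢
    omega
  · rintro ⟨m, l⟩ hp
    simp only [Finset.mem_sigma, Finset.mem_range] at hp
    have hml : m - l + l = m := by omega
    simp [hml]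
  · rintro ⟨r, i⟩ hp
    simp only [Finset.mem_sigma, Finset.mem_range] at hp
    simp [Nat.add_sub_cancel]
  · rintro ⟨m, l⟩ hp
    simp only [Finset.mem_sigma, Finset.mem_range] at hp
    have hml : m - l + l = m := by omega
    simp [hml]

lemma pqCauchy1_eq (p q : ℝ) (k : ℤ) (x : ℝ) (n : ℕ) :
    pqCauchy1 p q k x n = ∑ r ∈ range (n+1),
      (-1:ℝ)^(n+r) * stirling1W n r x * (1 / pqInt p q (r+1) ^ k) := by
  rw [pqCauchy1]
  have h1 : ∀ m ∈ range (n+1), (-1:ℝ)^(n-m) * (stirling1 n m : ℝ) *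
      ∑ l ∈ range (m+1), (m.choose l : ℝ) * (-x)^l / pqInt p q (m-l+1) ^ k
      = ∑ l ∈ range (m+1), (-1:ℝ)^(n-m) * (stirling1 n m : ℝ)
          * ((m.choose l : ℝ) * (-x)^l / pqInt p q (m-l+1) ^ k) :=
    fun m _ => Finset.mul_sum _ _ _
  rw [Finset.sum_congr rfl h1, tri_sum n]
  refine Finset.sum_congr rfl fun r hr => ?_
  rw [Finset.mem_range] at hr
  rw [stirling1W, Finset.mul_sum, Finset.sum_mul]
  refine Finset.sum_congr rfl fun i hi => ?_
  rw [Finset.mem_range] at hi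
  rw [Nat.add_sub_cancel]
  have hsign : (-1:ℝ)^(n-(r+i)) * (-1:ℝ)^i = (-1:ℝ)^(n+r) := by
    rw [← pow_add]
    calc (-1:ℝ)^(n-(r+i)+i) = (-1:ℝ)^(n-r) := by rw [show n-(r+i)+i = n-r from by omega]
      _ = (-1:ℝ)^(n-r) * ((-1:ℝ)^2)^r := by norm_num
      _ = (-1:ℝ)^(n-r+2*r) := by rw [← pow_mul, ← pow_add]
      _ = (-1:ℝ)^(n+r) := by rw [show n-r+2*r = n+r from by omega]
  rw [show ((-x)^i : ℝ) = (-1:ℝ)^i * x^i from by rw [neg_pow]]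
  linear_combination ((stirling1 n (r+i) : ℝ) * ((r+i).choose i : ℝ) * x^i
    / pqInt p q (r+1) ^ k) * hsign

lemma pqCauchy2_eq (p q : ℝ) (k : ℤ) (x : ℝ) (n : ℕ) :
    pqCauchy2 p q k x n = (-1:ℝ)^n * ∑ r ∈ range (n+1),
      stirling1W n r (-x) * (1 / pqInt p q (r+1) ^ k) := by
  rw [pqCauchy2]
  congr 1
  have h1 : ∀ m ∈ range (n+1), (stirling1 n m : ℝ) *
      ∑ l ∈ range (m+1), (m.choose l : ℝ) * (-x)^l / pqInt p q (m-l+1) ^ k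
      = ∑ l ∈ range (m+1), (stirling1 n m : ℝ)
          * ((m.choose l : ℝ) * (-x)^l / pqInt p q (m-l+1) ^ k) :=
    fun m _ => Finset.mul_sum _ _ _
  rw [Finset.sum_congr rfl h1, tri_sum n]
  refine Finset.sum_congr rfl fun r hr => ?_
  rw [stirling1W, Finset.sum_mul]
  refine Finset.sum_congr rfl fun i hi => ?_
  rw [Nat.add_sub_cancel]
  ring

lemma B_formula (p q : ℝ) (k : ℤ) (B : ℝ → ℕ → ℝ)
    (hB : ∀ x : ℝ,
      pqBernSeries p q k * PowerSeries.rescale (-x) (PowerSeries.exp ℝ) = egf (B x))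
    (x : ℝ) (n : ℕ) :
    B x n = ∑ i ∈ range (n+1), (n.choose i : ℝ) * (-x)^(n-i)
      * ((i.factorial : ℝ) * PowerSeries.coeff i (pqBernSeries p q k)) := by
  have h := congrArg (PowerSeries.coeff n) (hB x)
  rw [PowerSeries.coeff_mul, Finset.Nat.sum_antidiagonal_eq_sum_range_succ
    (fun a b => PowerSeries.coeff a (pqBernSeries p q k)
      * PowerSeries.coeff b (PowerSeries.rescale (-x) (PowerSeries.exp ℝ)))] at h
  have hegf : PowerSeries.coeff n (egf (B x)) = B x n / (n.factorial : ℝ) := by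
    rw [egf, PowerSeries.coeff_mk]
  rw [hegf] at h
  have h2 : ∀ i ∈ range (n+1),
      PowerSeries.coeff i (pqBernSeries p q k)
        * PowerSeries.coeff (n-i) (PowerSeries.rescale (-x) (PowerSeries.exp ℝ))
      = PowerSeries.coeff i (pqBernSeries p q k) * ((-x)^(n-i) / (((n-i).factorial : ℕ) : ℝ)) := by
    intro i _
    rw [coeff_rescale_exp]
  rw [Finset.sum_congr rfl h2] at h
  have hnf : ((n.factorial : ℕ) : ℝ) ≠ 0 := by exact_mod_cast n.factorial_ne_zero
  have h3 : B x n = (n.factorial : ℝ) * ∑ i ∈ range (n+1),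
      PowerSeries.coeff i (pqBernSeries p q k) * ((-x)^(n-i) / (((n-i).factorial : ℕ) : ℝ)) := by
    rw [h]
    field_simp
  rw [h3, Finset.mul_sum]
  refine Finset.sum_congr rfl fun i hi => ?_
  rw [Finset.mem_range] at hi
  have hchoose : ((n.factorial : ℕ) : ℝ)
      = (n.choose i : ℝ) * ((i.factorial : ℕ) : ℝ) * (((n-i).factorial : ℕ) : ℝ) := by
    rw [← Nat.choose_mul_factorial_mul_factorial (by omega : i ≤ n)]
    push_cast
    ring
  have hne : (((n-i).factorial : ℕ) : ℝ) ≠ 0 := by exact_mod_cast (n-i).factorial_ne_zero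
  rw [hchoose]
  field_simp

end Aux


theorem pq_inverse_relations
    (p q : ℝ) (hq : 0 < q) (hqp : q < p) (hp : p ≤ 1) (k : ℤ)
    (B : ℝ → ℕ → ℝ)
    (hB : ∀ x : ℝ,
      pqBernSeries p q k * PowerSeries.rescale (-x) (PowerSeries.exp ℝ) = egf (B x)) :
    ∀ (n : ℕ) (x : ℝ),
      (∑ m ∈ Finset.range (n + 1), stirling1W n m x * B x m =
          (n.factorial : ℝ) / pqInt p q (n + 1) ^ k) ∧
      (∑ m ∈ Finset.range (n + 1), stirling2W n m x * pqCauchy1 p q k x m =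
          1 / pqInt p q (n + 1) ^ k) ∧
      (∑ m ∈ Finset.range (n + 1), stirling2W n m (-x) * pqCauchy2 p q k x m =
          (-1 : ℝ) ^ n / pqInt p q (n + 1) ^ k) := by
  intro n x
  have hcoeff : ∀ i : ℕ, PowerSeries.coeff i (pqBernSeries p q k)
      = ∑ m ∈ Finset.range (i+1), cc i m * (1 / pqInt p q (m+1) ^ k) := by
    intro i
    rw [pqBernSeries, PowerSeries.coeff_mk]
    refine Finset.sum_congr rfl fun m _ => ?_
    simp only [cc, expS]
    ring
  refine ⟨?_, ?_, ?_⟩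
  · -- first identity
    have hBf := B_formula p q k B hB x
    calc ∑ m ∈ Finset.range (n+1), stirling1W n m x * B x m
        = ∑ m ∈ Finset.range (n+1), ∑ i ∈ Finset.range (n+1),
            stirling1W n m x * ((m.choose i : ℝ) * (-x)^(m-i)
              * ((i.factorial : ℝ) * PowerSeries.coeff i (pqBernSeries p q k))) := by
          refine Finset.sum_congr rfl fun m hm => ?_
          rw [Finset.mem_range] at hm
          rw [hBf m, Finset.mul_sum]
          refine Finset.sum_subset (Finset.range_subset_range.mpr (by omega)) ?_
          intro i _ hni
          have hlt : m < i := by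
            by_contra hc
            exact hni (Finset.mem_range.mpr (by omega))
          rw [Nat.choose_eq_zero_of_lt hlt]
          push_cast
          ring
      _ = ∑ i ∈ Finset.range (n+1), ((i.factorial : ℝ) * PowerSeries.coeff i (pqBernSeries p q k))
            * ∑ m ∈ Finset.range (n+1), stirling1W n m x * ((m.choose i : ℝ) * (-x)^(m-i)) := by
          rw [Finset.sum_comm]
          refine Finset.sum_congr rfl fun i _ => ?_
          rw [Finset.mul_sum]
          exact Finset.sum_congr rfl fun m _ => by ring
      _ = ∑ i ∈ Finset.range (n+1),
            ((i.factorial : ℝ) * PowerSeries.coeff i (pqBernSeries p q k)) * (stirling1 n i : ℝ) := by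
          refine Finset.sum_congr rfl fun i _ => ?_
          rw [E1]
      _ = ∑ i ∈ Finset.range (n+1), ∑ m ∈ Finset.range (n+1),
            (stirling1 n i : ℝ) * (i.factorial : ℝ) * cc i m * (1 / pqInt p q (m+1) ^ k) := by
          refine Finset.sum_congr rfl fun i hi => ?_
          rw [Finset.mem_range] at hi
          rw [hcoeff i]
          have hext : ∑ m ∈ Finset.range (i+1), cc i m * (1 / pqInt p q (m+1) ^ k)
              = ∑ m ∈ Finset.range (n+1), cc i m * (1 / pqInt p q (m+1) ^ k) := by
            refine Finset.sum_subset (Finset.range_subset_range.mpr (by omega)) ?_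
            intro m _ hmi
            have hlt : i < m := by
              by_contra hc
              exact hmi (Finset.mem_range.mpr (by omega))
            rw [cc_zero_of_lt hlt]
            ring
          rw [hext, Finset.mul_sum, Finset.sum_mul]
          refine Finset.sum_congr rfl fun m _ => by ring
      _ = ∑ m ∈ Finset.range (n+1), (1 / pqInt p q (m+1) ^ k)
            * ∑ i ∈ Finset.range (n+1), (stirling1 n i : ℝ) * (i.factorial : ℝ) * cc i m := by
          rw [Finset.sum_comm]
          refine Finset.sum_congr rfl fun m _ => ?_
          rw [Finset.mul_sum]
          exact Finset.sum_congr rfl fun i _ => by ring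
      _ = (n.factorial : ℝ) / pqInt p q (n+1) ^ k := by
          have hstep : ∀ m ∈ Finset.range (n+1),
              (1 / pqInt p q (m+1) ^ k)
                * (∑ i ∈ Finset.range (n+1), (stirling1 n i : ℝ) * (i.factorial : ℝ) * cc i m)
              = if m = n then (n.factorial : ℝ) / pqInt p q (n+1) ^ k else 0 := by
            intro m _
            rw [gamma_eq n m]
            split_ifs with h
            · subst h
              ring
            · ring
          rw [Finset.sum_congr rfl hstep, Finset.sum_ite_eq' (Finset.range (n+1)) n
            (fun _ => (n.factorial : ℝ) / pqInt p q (n+1) ^ k)]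
          simp
  · -- second identity
    calc ∑ m ∈ Finset.range (n+1), stirling2W n m x * pqCauchy1 p q k x m
        = ∑ m ∈ Finset.range (n+1), ∑ r ∈ Finset.range (n+1),
            stirling2W n m x * ((-1:ℝ)^(m+r) * stirling1W m r x * (1 / pqInt p q (r+1) ^ k)) := by
          refine Finset.sum_congr rfl fun m hm => ?_
          rw [Finset.mem_range] at hm
          rw [pqCauchy1_eq, Finset.mul_sum]
          refine Finset.sum_subset (Finset.range_subset_range.mpr (by omega)) ?_
          intro r _ hr
          have hlt : m < r := by
            by_contra hc
            exact hr (Finset.mem_range.mpr (by omega))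
          rw [stirling1W_of_lt hlt]
          ring
      _ = ∑ r ∈ Finset.range (n+1), (1 / pqInt p q (r+1) ^ k)
            * ∑ m ∈ Finset.range (n+1), stirling2W n m x * ((-1:ℝ)^(m+r) * stirling1W m r x) := by
          rw [Finset.sum_comm]
          refine Finset.sum_congr rfl fun r _ => ?_
          rw [Finset.mul_sum]
          exact Finset.sum_congr rfl fun m _ => by ring
      _ = 1 / pqInt p q (n+1) ^ k := by
          have hstep : ∀ r ∈ Finset.range (n+1),
              (1 / pqInt p q (r+1) ^ k)
                * (∑ m ∈ Finset.range (n+1), stirling2W n m x * ((-1:ℝ)^(m+r) * stirling1W m r x))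
              = if r = n then 1 / pqInt p q (n+1) ^ k else 0 := by
            intro r _
            rw [orthB n r x]
            split_ifs with h
            · subst h
              ring
            · ring
          rw [Finset.sum_congr rfl hstep, Finset.sum_ite_eq' (Finset.range (n+1)) n
            (fun _ => 1 / pqInt p q (n+1) ^ k)]
          simp
  · -- third identity
    calc ∑ m ∈ Finset.range (n+1), stirling2W n m (-x) * pqCauchy2 p q k x m
        = ∑ m ∈ Finset.range (n+1), ∑ r ∈ Finset.range (n+1),
            (-1:ℝ)^r * (stirling2W n m (-x) * ((-1:ℝ)^(m+r) * stirling1W m r (-x)))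
              * (1 / pqInt p q (r+1) ^ k) := by
          refine Finset.sum_congr rfl fun m hm => ?_
          rw [Finset.mem_range] at hm
          rw [pqCauchy2_eq]
          have hinner : stirling2W n m (-x) * ((-1:ℝ)^m
              * ∑ r ∈ Finset.range (m+1), stirling1W m r (-x) * (1 / pqInt p q (r+1) ^ k))
              = ∑ r ∈ Finset.range (m+1), (-1:ℝ)^r * (stirling2W n m (-x)
                  * ((-1:ℝ)^(m+r) * stirling1W m r (-x))) * (1 / pqInt p q (r+1) ^ k) := by
            rw [Finset.mul_sum, Finset.mul_sum]
            refine Finset.sum_congr rfl fun r _ => ?_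
            have hsgn : (-1:ℝ)^r * (-1:ℝ)^(m+r) = (-1:ℝ)^m := by
              rw [← pow_add, show r + (m+r) = m + 2*r from by ring, pow_add, pow_mul]
              norm_num
            calc stirling2W n m (-x) * ((-1:ℝ)^m * (stirling1W m r (-x) * (1 / pqInt p q (r+1) ^ k)))
                = stirling2W n m (-x) * (((-1:ℝ)^r * (-1:ℝ)^(m+r)) * (stirling1W m r (-x) * (1 / pqInt p q (r+1) ^ k))) := by
                  rw [hsgn]
              _ = (-1:ℝ)^r * (stirling2W n m (-x) * ((-1:ℝ)^(m+r) * stirling1W m r (-x))) * (1 / pqInt p q (r+1) ^ k) := by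
                  ring
          rw [hinner]
          refine Finset.sum_subset (Finset.range_subset_range.mpr (by omega)) ?_
          intro r _ hr
          have hlt : m < r := by
            by_contra hc
            exact hr (Finset.mem_range.mpr (by omega))
          rw [stirling1W_of_lt hlt]
          ring
      _ = ∑ r ∈ Finset.range (n+1), (-1:ℝ)^r * (1 / pqInt p q (r+1) ^ k)
            * ∑ m ∈ Finset.range (n+1), stirling2W n m (-x) * ((-1:ℝ)^(m+r) * stirling1W m r (-x)) := by
          rw [Finset.sum_comm]
          refine Finset.sum_congr rfl fun r _ => ?_
          rw [Finset.mul_sum]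
          exact Finset.sum_congr rfl fun m _ => by ring
      _ = (-1:ℝ)^n / pqInt p q (n+1) ^ k := by
          have hstep : ∀ r ∈ Finset.range (n+1),
              (-1:ℝ)^r * (1 / pqInt p q (r+1) ^ k)
                * (∑ m ∈ Finset.range (n+1), stirling2W n m (-x) * ((-1:ℝ)^(m+r) * stirling1W m r (-x)))
              = if r = n then (-1:ℝ)^n / pqInt p q (n+1) ^ k else 0 := by
            intro r _
            rw [orthB n r (-x)]
            split_ifs with h
            · subst h
              ring
            · ring
          rw [Finset.sum_congr rfl hstep, Finset.sum_ite_eq' (Finset.range (n+1)) n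
            (fun _ => (-1:ℝ)^n / pqInt p q (n+1) ^ k)]
          simp
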